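/- Let 0 ≤ α < 1, 0 ≤ x₁ < x₂ ≤ 1, let 𝓜 = 𝓜_{α,x₁,x₂} be the piecewise linear transformation of [0,1), and let 𝓢 be its maximal invariant set. Then there exists a nonnegative integer N such that 𝓢 = 𝓜^N([0,1)) \ H, where 𝓜^N denotes the N-fold iterate (image of the set) and H = [x₁,x₂). -/

import Mathlib

set_option linter.unusedSectionVars false
set_option linter.unusedVariables false
set_option maxHeartbeats 1000000


/-- The piecewise linear transformation `𝓜_{α,x₁,x₂}` of the circle `[0,1)`:
`t ↦ ⟨t + α + x₂ - x₁⟩` on `U = [0,x₁)`, identity on `H = [x₁,x₂)`,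
and `t ↦ ⟨t + α⟩` on `V = [x₂,1)`. -/
noncomputable def Mmap (α x₁ x₂ : ℝ) (t : ℝ) : ℝ :=
  if t < x₁ then Int.fract (t + α + x₂ - x₁)
  else if t < x₂ then t
  else Int.fract (t + α)

/-- The maximal invariant set `𝓢` of `𝓜_{α,x₁,x₂}`: points of `[0,1)` whose orbit
never enters `H = [x₁,x₂)`. -/
def Sset (α x₁ x₂ : ℝ) : Set ℝ :=
  {t | t ∈ Set.Ico (0 : ℝ) 1 ∧ ∀ n : ℕ, (Mmap α x₁ x₂)^[n] t ∉ Set.Ico x₁ x₂}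


namespace MIS

open Set

lemma fract01 {x : ℝ} (h0 : 0 ≤ x) (h1 : x < 1) : Int.fract x = x :=
  Int.fract_eq_self.2 ⟨h0, h1⟩

lemma fract12 {x : ℝ} (h0 : 1 ≤ x) (h1 : x < 2) : Int.fract x = x - 1 := by
  have : Int.fract (x - 1) = x - 1 := fract01 (by linarith) (by linarith)
  rw [← this, show x - 1 = x - (1:ℤ) by push_cast; ring, Int.fract_sub_intCast]

lemma fract_neg1 {x : ℝ} (h0 : -1 ≤ x) (h1 : x < 0) : Int.fract x = x + 1 := by
  have : Int.fract (x + 1) = x + 1 := fract01 (by linarith) (by linarith)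
  rw [← this, show x + 1 = x + (1:ℤ) by push_cast; ring, Int.fract_add_intCast]

lemma fract_fract_add (x y : ℝ) : Int.fract (Int.fract x + y) = Int.fract (x + y) := by
  have : Int.fract x + y = x + y - (⌊x⌋ : ℤ) := by rw [Int.fract]; ring
  rw [this, Int.fract_sub_intCast]

lemma fract_mem_Ico (x : ℝ) : Int.fract x ∈ Set.Ico (0:ℝ) 1 :=
  ⟨Int.fract_nonneg x, Int.fract_lt_one x⟩

section Params

variable (α x₁ x₂ : ℝ)

/-- the hole -/
def Hs : Set ℝ := Set.Ico x₁ x₂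

/-- the complement of the hole in `[0,1)` -/
def Bs : Set ℝ := Set.Ico (0:ℝ) 1 \ Hs x₁ x₂

/-- explicit inverse of `Mmap` on `Bs` -/
noncomputable def Minv (w : ℝ) : ℝ :=
  if Int.fract (w - (α + x₂ - x₁)) < x₁ then Int.fract (w - (α + x₂ - x₁))
  else Int.fract (w - α)

variable {α x₁ x₂}
variable (hα0 : 0 ≤ α) (hα1 : α < 1) (hx0 : 0 ≤ x₁) (hx : x₁ < x₂) (hx2 : x₂ ≤ 1)

lemma M_U {t : ℝ} (h : t < x₁) : Mmap α x₁ x₂ t = Int.fract (t + (α + x₂ - x₁)) := by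
  rw [Mmap, if_pos h]; ring_nf

lemma M_H {t : ℝ} (h1 : x₁ ≤ t) (h2 : t < x₂) : Mmap α x₁ x₂ t = t := by
  rw [Mmap, if_neg (not_lt.2 h1), if_pos h2]

lemma M_V {t : ℝ} (h1 : x₂ ≤ t) (hx : x₁ < x₂) : Mmap α x₁ x₂ t = Int.fract (t + α) := by
  rw [Mmap, if_neg (not_lt.2 (le_trans (le_of_lt hx) h1)), if_neg (not_lt.2 h1)]

lemma M_maps_Ico {t : ℝ} (ht : t ∈ Set.Ico (0:ℝ) 1) :
    Mmap α x₁ x₂ t ∈ Set.Ico (0:ℝ) 1 := by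
  rw [Mmap]
  split_ifs with h1 h2
  · exact fract_mem_Ico _
  · exact ht
  · exact fract_mem_Ico _

lemma mem_Bs {t : ℝ} : t ∈ Bs x₁ x₂ ↔ (0 ≤ t ∧ t < 1) ∧ (t < x₁ ∨ x₂ ≤ t) := by
  constructor
  · rintro ⟨⟨h0, h1⟩, hH⟩
    refine ⟨⟨h0, h1⟩, ?_⟩
    by_contra hc
    push_neg at hc
    exact hH ⟨hc.1, hc.2⟩
  · rintro ⟨⟨h0, h1⟩, hc⟩
    refine ⟨⟨h0, h1⟩, ?_⟩
    rintro ⟨ha, hb⟩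
    rcases hc with hc | hc
    · exact absurd ha (not_le.2 hc)
    · exact absurd hb (not_lt.2 hc)

include hα0 hx0 hx hx2 in
lemma Minv_leftInv {t : ℝ} (ht : t ∈ Bs x₁ x₂) :
    Minv α x₁ x₂ (Mmap α x₁ x₂ t) = t := by
  rw [mem_Bs] at ht
  obtain ⟨⟨h0, h1⟩, hc⟩ := ht
  rcases hc with hU | hV
  · -- t ∈ U
    rw [M_U hU, Minv]
    have key : Int.fract (Int.fract (t + (α + x₂ - x₁)) - (α + x₂ - x₁)) = t := by
      rw [show Int.fract (t + (α + x₂ - x₁)) - (α + x₂ - x₁)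
            = Int.fract (t + (α + x₂ - x₁)) + (-(α + x₂ - x₁)) by ring,
        fract_fract_add]
      rw [show t + (α + x₂ - x₁) + -(α + x₂ - x₁) = t by ring]
      exact fract01 h0 h1
    rw [key, if_pos hU]
  · -- t ∈ V
    rw [M_V hV hx, Minv]
    have key1 : Int.fract (Int.fract (t + α) - (α + x₂ - x₁)) = t - (x₂ - x₁) := by
      rw [show Int.fract (t + α) - (α + x₂ - x₁) = Int.fract (t + α) + (-(α + x₂ - x₁)) by ring,
        fract_fract_add]
      rw [show t + α + -(α + x₂ - x₁) = t - (x₂ - x₁) by ring]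
      exact fract01 (by linarith) (by linarith)
    rw [key1, if_neg (by push_neg; linarith)]
    rw [show Int.fract (t + α) - α = Int.fract (t + α) + (-α) by ring, fract_fract_add]
    rw [show t + α + -α = t by ring]
    exact fract01 h0 h1

include hα0 hx0 hx hx2 in
lemma M_injOn : Set.InjOn (Mmap α x₁ x₂) (Bs x₁ x₂) := by
  intro a ha b hb hab
  have := Minv_leftInv hα0 hx0 hx hx2 ha
  rw [hab, Minv_leftInv hα0 hx0 hx hx2 hb] at this
  exact this.symm

include hx0 hx hx2 in
lemma M_image_Bs :
    Mmap α x₁ x₂ '' Bs x₁ x₂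
      = {w | w ∈ Set.Ico (0:ℝ) 1 ∧ x₂ - x₁ ≤ Int.fract (w - α)} := by
  ext w
  constructor
  · rintro ⟨t, ht, rfl⟩
    rw [mem_Bs] at ht
    obtain ⟨⟨h0, h1⟩, hc⟩ := ht
    refine ⟨M_maps_Ico ⟨h0, h1⟩, ?_⟩
    rcases hc with hU | hV
    · rw [M_U hU]
      have : Int.fract (Int.fract (t + (α + x₂ - x₁)) - α) = t + (x₂ - x₁) := by
        rw [show Int.fract (t + (α + x₂ - x₁)) - α
              = Int.fract (t + (α + x₂ - x₁)) + (-α) by ring, fract_fract_add]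
        rw [show t + (α + x₂ - x₁) + -α = t + (x₂ - x₁) by ring]
        exact fract01 (by linarith) (by linarith)
      rw [this]; linarith
    · rw [M_V hV hx]
      have : Int.fract (Int.fract (t + α) - α) = t := by
        rw [show Int.fract (t + α) - α = Int.fract (t + α) + (-α) by ring, fract_fract_add]
        rw [show t + α + -α = t by ring]
        exact fract01 h0 h1
      rw [this]; linarith
  · rintro ⟨⟨hw0, hw1⟩, hge⟩
    set d := Int.fract (w - α) with hd
    have hd0 : 0 ≤ d := Int.fract_nonneg _
    have hd1 : d < 1 := Int.fract_lt_one _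
    have hfw : Int.fract (d + α) = w := by
      rw [hd, fract_fract_add, show w - α + α = w by ring]
      exact fract01 hw0 hw1
    by_cases hcase : d < x₂
    · refine ⟨d - (x₂ - x₁), ?_, ?_⟩
      · rw [mem_Bs]
        exact ⟨⟨by linarith, by linarith⟩, Or.inl (by linarith)⟩
      · rw [M_U (by linarith)]
        rw [show d - (x₂ - x₁) + (α + x₂ - x₁) = d + α by ring]
        exact hfw
    · push_neg at hcase
      refine ⟨d, ?_, ?_⟩
      · rw [mem_Bs]
        exact ⟨⟨hd0, hd1⟩, Or.inr hcase⟩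
      · rw [M_V hcase hx]
        exact hfw

lemma M_id_image {X : Set ℝ} (hX : X ⊆ Hs x₁ x₂) : Mmap α x₁ x₂ '' X = X := by
  have : ∀ t ∈ X, Mmap α x₁ x₂ t = t := fun t ht => M_H (hX ht).1 (hX ht).2
  rw [Set.image_congr this, Set.image_id']

end Params

section Pieces

/-- the translation constant used on a piece (by its left endpoint) -/
noncomputable def brc (α x₁ x₂ : ℝ) (p : ℝ × ℝ) : ℝ := if p.1 < x₁ then α + x₂ - x₁ else α

variable (α x₁ x₂ : ℝ)

/-- split a half-open interval by removing the hole `[x₁,x₂)` -/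
def hsplit (p : ℝ × ℝ) : List (ℝ × ℝ) := [(p.1, min p.2 x₁), (max p.1 x₂, p.2)]

/-- the images of a (single-branch) piece under the map, split along wrap and hole -/
noncomputable def children (p : ℝ × ℝ) : List (ℝ × ℝ) :=
  hsplit x₁ x₂ (p.1 + brc α x₁ x₂ p, min (p.2 + brc α x₁ x₂ p) 1) ++
    hsplit x₁ x₂ (max (p.1 + brc α x₁ x₂ p) 1 - 1, p.2 + brc α x₁ x₂ p - 1)

/-- union of the intervals of a list of pieces -/
def IU (l : List (ℝ × ℝ)) : Set ℝ := {x | ∃ p ∈ l, x ∈ Set.Ico p.1 p.2}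

/-- the pieces of generation `n` -/
noncomputable def LG : ℕ → List (ℝ × ℝ)
  | 0 => hsplit x₁ x₂ (α, min (α + (x₂ - x₁)) 1) ++ hsplit x₁ x₂ (0, α + (x₂ - x₁) - 1)
  | n+1 => (LG n).flatMap (children α x₁ x₂)

/-- the pieces of `𝓜^n([0,1)) \ H` -/
noncomputable def LB : ℕ → List (ℝ × ℝ)
  | 0 => [(0, x₁), (x₂, 1)]
  | n+1 => (LB n).flatMap (children α x₁ x₂)

/-- generation `n`: points reachable at time `n` but not earlier-dead, complement-side -/
noncomputable def Gam : ℕ → Set ℝ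
  | 0 => (Set.Ico (0:ℝ) 1 \ Mmap α x₁ x₂ '' Bs x₁ x₂) \ Hs x₁ x₂
  | n+1 => Mmap α x₁ x₂ '' Gam n \ Hs x₁ x₂

/-- the iterated images -/
noncomputable def An (n : ℕ) : Set ℝ := (Mmap α x₁ x₂)^[n] '' Set.Ico 0 1

end Pieces

section PieceLemmas

variable {α x₁ x₂ : ℝ}

lemma IU_nil : IU ([] : List (ℝ × ℝ)) = ∅ := by
  ext x; simp [IU]

lemma IU_cons (p : ℝ × ℝ) (l : List (ℝ × ℝ)) :
    IU (p :: l) = Set.Ico p.1 p.2 ∪ IU l := by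
  ext x
  simp only [IU, Set.mem_setOf_eq, List.mem_cons, Set.mem_union]
  constructor
  · rintro ⟨q, hq | hq, hx⟩
    · exact Or.inl (hq ▸ hx)
    · exact Or.inr ⟨q, hq, hx⟩
  · rintro (hx | ⟨q, hq, hx⟩)
    · exact ⟨p, Or.inl rfl, hx⟩
    · exact ⟨q, Or.inr hq, hx⟩

lemma IU_append (l₁ l₂ : List (ℝ × ℝ)) : IU (l₁ ++ l₂) = IU l₁ ∪ IU l₂ := by
  ext x
  simp only [IU, Set.mem_setOf_eq, List.mem_append, Set.mem_union]
  constructor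
  · rintro ⟨q, hq | hq, hx⟩
    · exact Or.inl ⟨q, hq, hx⟩
    · exact Or.inr ⟨q, hq, hx⟩
  · rintro (⟨q, hq, hx⟩ | ⟨q, hq, hx⟩)
    · exact ⟨q, Or.inl hq, hx⟩
    · exact ⟨q, Or.inr hq, hx⟩

lemma mem_IU_flatMap {l : List (ℝ × ℝ)} {f : ℝ × ℝ → List (ℝ × ℝ)} {x : ℝ} :
    x ∈ IU (l.flatMap f) ↔ ∃ p ∈ l, x ∈ IU (f p) := by
  simp only [IU, Set.mem_setOf_eq, List.mem_flatMap]
  constructor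
  · rintro ⟨q, ⟨p, hp, hq⟩, hx⟩
    exact ⟨p, hp, q, hq, hx⟩
  · rintro ⟨p, hp, q, hq, hx⟩
    exact ⟨q, ⟨p, hp, hq⟩, hx⟩

lemma piece_subset_IU {l : List (ℝ × ℝ)} {p : ℝ × ℝ} (hp : p ∈ l) :
    Set.Ico p.1 p.2 ⊆ IU l := fun x hx => ⟨p, hp, hx⟩

lemma Ico_diff_Ico (a b c d : ℝ) :
    Set.Ico a b \ Set.Ico c d = Set.Ico a (min b c) ∪ Set.Ico (max a d) b := by
  ext x
  simp only [Set.mem_diff, Set.mem_Ico, Set.mem_union, lt_min_iff, max_le_iff, not_and, not_lt]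
  constructor
  · rintro ⟨⟨ha, hb⟩, hcd⟩
    rcases lt_or_ge x c with hc | hc
    · exact Or.inl ⟨ha, hb, hc⟩
    · exact Or.inr ⟨⟨ha, hcd hc⟩, hb⟩
  · rintro (⟨ha, hb, hc⟩ | ⟨⟨ha, hd⟩, hb⟩)
    · exact ⟨⟨ha, hb⟩, fun hc' => absurd hc' (not_le.2 hc)⟩
    · exact ⟨⟨ha, hb⟩, fun _ => hd⟩

lemma IU_hsplit (p : ℝ × ℝ) : IU (hsplit x₁ x₂ p) = Set.Ico p.1 p.2 \ Hs x₁ x₂ := by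
  rw [hsplit, IU_cons, IU_cons, IU_nil, Set.union_empty, Hs, Ico_diff_Ico]

lemma fract_image_Ico {c a b : ℝ} (h1 : 0 ≤ a + c) (h2 : b + c ≤ 2) :
    (fun t => Int.fract (t + c)) '' Set.Ico a b
      = Set.Ico (a+c) (min (b+c) 1) ∪ Set.Ico (max (a+c) 1 - 1) (b+c-1) := by
  ext w
  constructor
  · rintro ⟨t, ⟨hta, htb⟩, rfl⟩
    dsimp only
    rcases lt_or_ge (t + c) 1 with htc | htc
    · left
      rw [fract01 (by linarith) htc]
      exact ⟨by linarith, lt_min (by linarith) htc⟩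
    · right
      rw [fract12 htc (by linarith)]
      refine ⟨by simp only [sub_le_sub_iff_right, max_le_iff]; exact ⟨by linarith, htc⟩, by linarith⟩
  · rintro (⟨hw1, hw2⟩ | ⟨hw1, hw2⟩)
    · rw [lt_min_iff] at hw2
      refine ⟨w - c, ⟨by linarith, by linarith⟩, ?_⟩
      dsimp only
      rw [show w - c + c = w by ring]
      exact fract01 (by linarith) hw2.2
    · have hmax : max (a + c) 1 - 1 ≤ w := hw1
      have h1w : a + c - 1 ≤ w := by
        have := le_max_left (a+c) 1; linarith
      have h0w : 0 ≤ w := by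
        have := le_max_right (a+c) 1; linarith
      refine ⟨w + 1 - c, ⟨by linarith, by linarith⟩, ?_⟩
      dsimp only
      rw [show w + 1 - c + c = w + 1 by ring, Int.fract_add_one]
      exact fract01 h0w (by linarith)

end PieceLemmas

section MainLemmas

variable {α x₁ x₂ : ℝ}
variable (hα0 : 0 ≤ α) (hα1 : α < 1) (hx0 : 0 ≤ x₁) (hx : x₁ < x₂) (hx2 : x₂ ≤ 1)

include hx in
lemma piece_branch {p : ℝ × ℝ} (hab : p.1 < p.2) (hsub : Set.Ico p.1 p.2 ⊆ Bs x₁ x₂) :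
    (p.1 < x₁ ∧ p.2 ≤ x₁ ∧ 0 ≤ p.1) ∨ (¬(p.1 < x₁) ∧ x₂ ≤ p.1 ∧ p.2 ≤ 1) := by
  have hmem := hsub ⟨le_refl _, hab⟩
  rw [mem_Bs] at hmem
  obtain ⟨⟨h0, _⟩, hc⟩ := hmem
  rcases hc with hU | hV
  · left
    refine ⟨hU, ?_, h0⟩
    by_contra hcon
    push_neg at hcon
    have : x₁ ∈ Bs x₁ x₂ := hsub ⟨le_of_lt hU, hcon⟩
    rw [mem_Bs] at this
    rcases this.2 with h | h
    · exact lt_irrefl _ h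
    · linarith
  · right
    refine ⟨by linarith, hV, ?_⟩
    by_contra hcon
    push_neg at hcon
    have h1 : max p.1 1 ∈ Set.Ico p.1 p.2 := ⟨le_max_left _ _, max_lt hab hcon⟩
    have := (hsub h1).1.2
    have := le_max_right p.1 1
    linarith

include hx in
lemma M_on_piece {p : ℝ × ℝ} (hab : p.1 < p.2) (hsub : Set.Ico p.1 p.2 ⊆ Bs x₁ x₂) :
    ∀ t ∈ Set.Ico p.1 p.2, Mmap α x₁ x₂ t = Int.fract (t + brc α x₁ x₂ p) := by
  intro t ht
  rcases piece_branch hx hab hsub with ⟨hU, hb, _⟩ | ⟨hU, hV, _⟩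
  · rw [brc, if_pos hU, M_U (lt_of_lt_of_le ht.2 hb)]
  · rw [brc, if_neg hU, M_V (le_trans hV ht.1) hx]

include hα0 hα1 hx0 hx hx2 in
lemma children_image {p : ℝ × ℝ} (hsub : Set.Ico p.1 p.2 ⊆ Bs x₁ x₂) :
    Mmap α x₁ x₂ '' Set.Ico p.1 p.2
      = Set.Ico (p.1 + brc α x₁ x₂ p) (min (p.2 + brc α x₁ x₂ p) 1)
        ∪ Set.Ico (max (p.1 + brc α x₁ x₂ p) 1 - 1) (p.2 + brc α x₁ x₂ p - 1) := by
  by_cases hab : p.1 < p.2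
  · rw [Set.image_congr (M_on_piece hx hab hsub)]
    have hbrc0 : 0 ≤ brc α x₁ x₂ p := by
      rw [brc]; split_ifs <;> linarith
    rcases piece_branch hx hab hsub with ⟨hU, hb, h0⟩ | ⟨hU, hV, hb⟩
    · refine fract_image_Ico (by linarith) ?_
      rw [brc, if_pos hU]; linarith
    · refine fract_image_Ico (by linarith) ?_
      rw [brc, if_neg hU]; linarith
  · push_neg at hab
    rw [Set.Ico_eq_empty (not_lt.2 hab), Set.image_empty,
      Set.Ico_eq_empty (by push_neg; exact le_trans (min_le_left _ _) (by linarith)),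
      Set.Ico_eq_empty (by
        push_neg
        have := le_max_left (p.1 + brc α x₁ x₂ p) 1
        linarith), Set.union_empty]

include hα0 hα1 hx0 hx hx2 in
lemma children_spec {p : ℝ × ℝ} (hsub : Set.Ico p.1 p.2 ⊆ Bs x₁ x₂) :
    Mmap α x₁ x₂ '' Set.Ico p.1 p.2 \ Hs x₁ x₂ = IU (children α x₁ x₂ p) := by
  rw [children, IU_append, IU_hsplit, IU_hsplit]
  dsimp only
  rw [← Set.union_diff_distrib, ← children_image hα0 hα1 hx0 hx hx2 hsub]

lemma image_IU (f : ℝ → ℝ) (l : List (ℝ × ℝ)) :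
    f '' IU l = {x | ∃ p ∈ l, x ∈ f '' Set.Ico p.1 p.2} := by
  ext x
  constructor
  · rintro ⟨t, ⟨p, hp, ht⟩, rfl⟩
    exact ⟨p, hp, t, ht, rfl⟩
  · rintro ⟨p, hp, t, ht, rfl⟩
    exact ⟨t, ⟨p, hp, ht⟩, rfl⟩

include hx0 hx hx2 in
lemma Gam_subset_Bs : ∀ n, Gam α x₁ x₂ n ⊆ Bs x₁ x₂ := by
  intro n
  induction n with
  | zero =>
    intro x hx'
    exact ⟨hx'.1.1, hx'.2⟩
  | succ n ih =>
    intro x hx'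
    refine ⟨?_, hx'.2⟩
    obtain ⟨t, ht, rfl⟩ := hx'.1
    exact M_maps_Ico (ih ht).1

lemma Gam_succ_subset_image (n : ℕ) (hs : Gam α x₁ x₂ n ⊆ Bs x₁ x₂) :
    Gam α x₁ x₂ (n + 1) ⊆ Mmap α x₁ x₂ '' Bs x₁ x₂ :=
  fun x hx' => Set.image_mono hs hx'.1

include hα0 hx0 hx hx2 in
lemma Gam_disjoint : ∀ i k, Gam α x₁ x₂ i ∩ Gam α x₁ x₂ (i + k + 1) = ∅ := by
  intro i
  induction i with
  | zero =>
    intro k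
    ext x
    simp only [Set.mem_inter_iff, Set.mem_empty_iff_false, iff_false, not_and]
    intro h0 hk
    have h1 : x ∈ Mmap α x₁ x₂ '' Bs x₁ x₂ := by
      have : (0 + k + 1) = k + 1 := by omega
      rw [this] at hk
      exact Gam_succ_subset_image k (Gam_subset_Bs hx0 hx hx2 k) hk
    exact h0.1.2 h1
  | succ i ih =>
    intro k
    have hidx : i + 1 + k + 1 = (i + k + 1) + 1 := by omega
    rw [hidx]
    ext x
    simp only [Set.mem_inter_iff, Set.mem_empty_iff_false, iff_false, not_and]
    intro h1 h2
    have h3 : x ∈ Mmap α x₁ x₂ '' Gam α x₁ x₂ i ∩ Mmap α x₁ x₂ '' Gam α x₁ x₂ (i + k + 1) :=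
      ⟨h1.1, h2.1⟩
    rw [← Set.InjOn.image_inter (M_injOn hα0 hx0 hx hx2)
      (Gam_subset_Bs hx0 hx hx2 i) (Gam_subset_Bs hx0 hx hx2 (i + k + 1))] at h3
    rw [ih k, Set.image_empty] at h3
    exact h3

include hα0 hα1 hx0 hx hx2 in
lemma IU_LG : ∀ n, IU (LG α x₁ x₂ n) = Gam α x₁ x₂ n := by
  intro n
  induction n with
  | zero =>
    rw [LG, IU_append, IU_hsplit, IU_hsplit, ← Set.union_diff_distrib]
    show (Set.Ico α (min (α + (x₂ - x₁)) 1) ∪ Set.Ico 0 (α + (x₂ - x₁) - 1)) \ Hs x₁ x₂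
      = Gam α x₁ x₂ 0
    rw [Gam]
    congr 1
    rw [M_image_Bs hx0 hx hx2]
    ext w
    simp only [Set.mem_union, Set.mem_Ico, Set.mem_diff, Set.mem_setOf_eq, not_and, not_le]
    constructor
    · rintro (⟨hw1, hw2⟩ | ⟨hw1, hw2⟩)
      · rw [lt_min_iff] at hw2
        have hw0 : (0:ℝ) ≤ w := le_trans hα0 hw1
        refine ⟨⟨hw0, hw2.2⟩, fun _ => ?_⟩
        rw [fract01 (by linarith) (by linarith)]
        linarith
      · have hwα : w < α := by linarith
        refine ⟨⟨hw1, by linarith⟩, fun _ => ?_⟩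
        rw [fract_neg1 (by linarith) (by linarith)]
        linarith
    · rintro ⟨⟨hw0, hw1⟩, hf⟩
      have hf' := hf ⟨hw0, hw1⟩
      rcases le_or_gt α w with hαw | hαw
      · left
        rw [fract01 (by linarith) (by linarith)] at hf'
        exact ⟨hαw, lt_min (by linarith) hw1⟩
      · right
        rw [fract_neg1 (by linarith) (by linarith)] at hf'
        exact ⟨hw0, by linarith⟩
  | succ n ih =>
    ext x
    rw [LG]
    rw [show Gam α x₁ x₂ (n+1) = Mmap α x₁ x₂ '' Gam α x₁ x₂ n \ Hs x₁ x₂ from rfl]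
    rw [← ih, mem_IU_flatMap]
    have hpieces : ∀ p ∈ LG α x₁ x₂ n, Set.Ico p.1 p.2 ⊆ Bs x₁ x₂ := by
      intro p hp
      exact le_trans (piece_subset_IU hp) (by rw [ih]; exact Gam_subset_Bs hx0 hx hx2 n)
    constructor
    · rintro ⟨p, hp, hxp⟩
      rw [← children_spec hα0 hα1 hx0 hx hx2 (hpieces p hp)] at hxp
      exact ⟨Set.image_mono (piece_subset_IU hp) hxp.1, hxp.2⟩
    · rintro ⟨hxim, hxH⟩
      rw [image_IU] at hxim
      obtain ⟨p, hp, hxp⟩ := hxim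
      refine ⟨p, hp, ?_⟩
      rw [← children_spec hα0 hα1 hx0 hx hx2 (hpieces p hp)]
      exact ⟨hxp, hxH⟩

lemma An_zero : An α x₁ x₂ 0 = Set.Ico 0 1 := by
  rw [An, Function.iterate_zero, Set.image_id]

lemma An_succ (n : ℕ) : An α x₁ x₂ (n+1) = Mmap α x₁ x₂ '' An α x₁ x₂ n := by
  rw [An, An, Function.iterate_succ', Set.image_comp]

lemma An_subset_Ico : ∀ n, An α x₁ x₂ n ⊆ Set.Ico 0 1 := by
  intro n
  induction n with
  | zero => rw [An_zero]
  | succ n ih =>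
    rw [An_succ]
    rintro x ⟨t, ht, rfl⟩
    exact M_maps_Ico (ih ht)

include hx0 hx2 in
lemma H_subset_An : ∀ n, Hs x₁ x₂ ⊆ An α x₁ x₂ n := by
  intro n
  induction n with
  | zero =>
    rw [An_zero]
    rintro t ⟨h1, h2⟩
    exact ⟨by linarith, by linarith⟩
  | succ n ih =>
    rw [An_succ]
    rintro t ht
    exact ⟨t, ih ht, M_H ht.1 ht.2⟩

include hα0 hx0 hx hx2 in
lemma image_diff_injOn {X E : Set ℝ} (hE : E ⊆ X) (hX : X ⊆ Bs x₁ x₂) :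
    Mmap α x₁ x₂ '' (X \ E) = Mmap α x₁ x₂ '' X \ Mmap α x₁ x₂ '' E := by
  ext x
  constructor
  · rintro ⟨t, ⟨htX, htE⟩, rfl⟩
    refine ⟨⟨t, htX, rfl⟩, ?_⟩
    rintro ⟨s, hsE, hst⟩
    have : s = t := M_injOn hα0 hx0 hx hx2 (hX (hE hsE)) (hX htX) hst
    exact htE (this ▸ hsE)
  · rintro ⟨⟨t, htX, rfl⟩, hnE⟩
    refine ⟨t, ⟨htX, fun htE => hnE ⟨t, htE, rfl⟩⟩, rfl⟩

end MainLemmas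

section EsSection

variable {α x₁ x₂ : ℝ}
variable (hα0 : 0 ≤ α) (hα1 : α < 1) (hx0 : 0 ≤ x₁) (hx : x₁ < x₂) (hx2 : x₂ ≤ 1)

/-- the complement of `A_n` in `[0,1)` -/
noncomputable def Es (α x₁ x₂ : ℝ) (n : ℕ) : Set ℝ := Set.Ico (0:ℝ) 1 \ An α x₁ x₂ n

lemma An_eq_compl (n : ℕ) : An α x₁ x₂ n = Set.Ico 0 1 \ Es α x₁ x₂ n := by
  rw [Es, Set.diff_diff_cancel_left (An_subset_Ico n)]

include hx0 hx2 in
lemma Es_subset_Bs (n : ℕ) : Es α x₁ x₂ n ⊆ Bs x₁ x₂ :=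
  fun x hx' => ⟨hx'.1, fun hH => hx'.2 (H_subset_An hx0 hx2 n hH)⟩

include hx0 hx2 in
lemma An_succ_split (n : ℕ) :
    An α x₁ x₂ (n+1) = Hs x₁ x₂ ∪ Mmap α x₁ x₂ '' (An α x₁ x₂ n \ Hs x₁ x₂) := by
  rw [An_succ]
  conv_lhs => rw [← Set.inter_union_diff (An α x₁ x₂ n) (Hs x₁ x₂)]
  rw [Set.image_union, M_id_image Set.inter_subset_right,
    Set.inter_eq_right.mpr (H_subset_An hx0 hx2 n)]

include hα0 hx0 hx hx2 in
lemma Es_succ (n : ℕ) :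
    Es α x₁ x₂ (n+1) = Gam α x₁ x₂ 0 ∪ (Mmap α x₁ x₂ '' Es α x₁ x₂ n \ Hs x₁ x₂) := by
  have h1 : An α x₁ x₂ n \ Hs x₁ x₂ = Bs x₁ x₂ \ Es α x₁ x₂ n := by
    rw [An_eq_compl n, Set.diff_diff_comm]; rfl
  have h2 : Mmap α x₁ x₂ '' (Bs x₁ x₂ \ Es α x₁ x₂ n)
      = Mmap α x₁ x₂ '' Bs x₁ x₂ \ Mmap α x₁ x₂ '' Es α x₁ x₂ n :=
    image_diff_injOn hα0 hx0 hx hx2 (Es_subset_Bs hx0 hx2 n) (le_refl _)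
  rw [Es, An_succ_split hx0 hx2 n, ← Set.diff_diff, h1, h2]
  rw [show Set.Ico (0:ℝ) 1 \ Hs x₁ x₂ = Bs x₁ x₂ from rfl, Set.diff_diff_right]
  congr 1
  · rw [show Gam α x₁ x₂ 0 = (Set.Ico (0:ℝ) 1 \ Mmap α x₁ x₂ '' Bs x₁ x₂) \ Hs x₁ x₂ from rfl,
      Set.diff_diff_comm]
    rfl
  · ext x
    constructor
    · rintro ⟨⟨_, hH⟩, hM⟩
      exact ⟨hM, hH⟩
    · rintro ⟨hM, hH⟩
      obtain ⟨t, ht, rfl⟩ := hM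
      exact ⟨⟨M_maps_Ico (Set.diff_subset ht), hH⟩, ⟨t, ht, rfl⟩⟩

include hα0 hx0 hx hx2 in
lemma Es_eq : ∀ n, Es α x₁ x₂ n = {x | ∃ j, j < n ∧ x ∈ Gam α x₁ x₂ j} := by
  intro n
  induction n with
  | zero =>
    rw [Es, An_zero, Set.diff_self]
    ext x; simp
  | succ n ih =>
    rw [Es_succ hα0 hx0 hx hx2 n, ih]
    have him : Mmap α x₁ x₂ '' {x | ∃ j, j < n ∧ x ∈ Gam α x₁ x₂ j}
        = {x | ∃ j, j < n ∧ x ∈ Mmap α x₁ x₂ '' Gam α x₁ x₂ j} := by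
      ext x
      constructor
      · rintro ⟨t, ⟨j, hj, ht⟩, rfl⟩
        exact ⟨j, hj, t, ht, rfl⟩
      · rintro ⟨j, hj, t, ht, rfl⟩
        exact ⟨t, ⟨j, hj, ht⟩, rfl⟩
    rw [him]
    ext x
    simp only [Set.mem_union, Set.mem_setOf_eq, Set.mem_diff]
    constructor
    · rintro (hx0' | ⟨⟨j, hj, hxj⟩, hH⟩)
      · exact ⟨0, by omega, hx0'⟩
      · exact ⟨j + 1, by omega, hxj, hH⟩
    · rintro ⟨j, hj, hxj⟩
      rcases j with _ | j
      · exact Or.inl hxj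
      · exact Or.inr ⟨⟨j, by omega, hxj.1⟩, hxj.2⟩

lemma Gam_add_empty {N : ℕ} (hN : Gam α x₁ x₂ N = ∅) : ∀ k, Gam α x₁ x₂ (N + k) = ∅ := by
  intro k
  induction k with
  | zero => exact hN
  | succ k ih =>
    show Mmap α x₁ x₂ '' Gam α x₁ x₂ (N + k) \ Hs x₁ x₂ = ∅
    rw [ih, Set.image_empty, Set.empty_diff]

include hα0 hx0 hx hx2 in
lemma An_stab {N : ℕ} (hN : Gam α x₁ x₂ N = ∅) {n : ℕ} (hn : N ≤ n) :
    An α x₁ x₂ n = An α x₁ x₂ N := by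
  rw [An_eq_compl n, An_eq_compl N]
  congr 1
  rw [Es_eq hα0 hx0 hx hx2 n, Es_eq hα0 hx0 hx hx2 N]
  ext x
  simp only [Set.mem_setOf_eq]
  constructor
  · rintro ⟨j, hj, hxj⟩
    refine ⟨j, ?_, hxj⟩
    by_contra hc
    push_neg at hc
    have : Gam α x₁ x₂ j = ∅ := by
      have := Gam_add_empty hN (j - N)
      rwa [show N + (j - N) = j by omega] at this
    rw [this] at hxj
    exact hxj
  · rintro ⟨j, hj, hxj⟩
    exact ⟨j, by omega, hxj⟩

end EsSection

section MeasureSection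

open MeasureTheory

variable {α x₁ x₂ : ℝ}
variable (hα0 : 0 ≤ α) (hα1 : α < 1) (hx0 : 0 ≤ x₁) (hx : x₁ < x₂) (hx2 : x₂ ≤ 1)

/-- pairwise disjointness of the intervals of a list of pieces -/
def PD (l : List (ℝ × ℝ)) : Prop :=
  l.Pairwise (fun p q => Disjoint (Set.Ico p.1 p.2) (Set.Ico q.1 q.2))

lemma IU_measurable (l : List (ℝ × ℝ)) : MeasurableSet (IU l) := by
  induction l with
  | nil => rw [IU_nil]; exact MeasurableSet.empty
  | cons p l ih => rw [IU_cons]; exact measurableSet_Ico.union ih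

lemma disjoint_IU {p : ℝ × ℝ} {l : List (ℝ × ℝ)}
    (h : ∀ q ∈ l, Disjoint (Set.Ico p.1 p.2) (Set.Ico q.1 q.2)) :
    Disjoint (Set.Ico p.1 p.2) (IU l) := by
  rw [Set.disjoint_left]
  rintro x hxp ⟨q, hq, hxq⟩
  exact Set.disjoint_left.1 (h q hq) hxp hxq

lemma vol_IU {l : List (ℝ × ℝ)} (hPD : PD l) :
    volume (IU l) = (l.map (fun p => ENNReal.ofReal (p.2 - p.1))).sum := by
  induction l with
  | nil => simp [IU_nil]
  | cons p l ih =>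
    rw [PD, List.pairwise_cons] at hPD
    rw [IU_cons, measure_union (disjoint_IU hPD.1) (IU_measurable l), Real.volume_Ico,
      ih hPD.2, List.map_cons, List.sum_cons]

include hx0 hx hx2 in
lemma piece_len_le_one {p : ℝ × ℝ} (hsub : Set.Ico p.1 p.2 ⊆ Bs x₁ x₂) : p.2 - p.1 ≤ 1 := by
  by_cases hab : p.1 < p.2
  · rcases piece_branch hx hab hsub with ⟨_, hb, h0⟩ | ⟨_, hV, hb⟩
    · linarith
    · linarith
  · push_neg at hab; linarith

include hα0 hα1 hx0 hx hx2 in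
lemma vol_image_piece {p : ℝ × ℝ} (hsub : Set.Ico p.1 p.2 ⊆ Bs x₁ x₂) :
    volume (Mmap α x₁ x₂ '' Set.Ico p.1 p.2) = ENNReal.ofReal (p.2 - p.1) := by
  rw [children_image hα0 hα1 hx0 hx hx2 hsub]
  set A := p.1 + brc α x₁ x₂ p with hA
  set B := p.2 + brc α x₁ x₂ p with hB
  have hBA : B - A = p.2 - p.1 := by rw [hA, hB]; ring
  have hlen1 : B - 1 ≤ A := by
    have := piece_len_le_one hx0 hx hx2 hsub; linarith
  have hdisj : Disjoint (Set.Ico A (min B 1)) (Set.Ico (max A 1 - 1) (B - 1)) := by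
    rw [Set.Ico_disjoint_Ico]
    have h1 : min (min B 1) (B-1) ≤ B - 1 := min_le_right _ _
    have h2 : (A:ℝ) ≤ max A (max A 1 - 1) := le_max_left _ _
    linarith
  rw [measure_union hdisj measurableSet_Ico, Real.volume_Ico, Real.volume_Ico]
  by_cases hab : p.1 < p.2
  · have hAB : A < B := by rw [hA, hB]; linarith
    rcases le_or_gt B 1 with hB1 | hB1
    · rw [min_eq_left hB1]
      have : ENNReal.ofReal (B - 1 - (max A 1 - 1)) = 0 := by
        rw [ENNReal.ofReal_eq_zero]
        have := le_max_right A 1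
        linarith
      rw [this, add_zero, hBA]
    · rcases le_or_gt 1 A with hA1 | hA1
      · rw [max_eq_left hA1]
        have : ENNReal.ofReal (min B 1 - A) = 0 := by
          rw [ENNReal.ofReal_eq_zero]
          have := min_le_right B 1
          linarith
        rw [this, zero_add, show B - 1 - (A - 1) = p.2 - p.1 by rw [← hBA]; ring]
      · rw [min_eq_right (le_of_lt hB1), max_eq_right (le_of_lt hA1)]
        rw [← ENNReal.ofReal_add (by linarith) (by linarith)]
        rw [show 1 - A + (B - 1 - (1 - 1)) = p.2 - p.1 by rw [← hBA]; ring]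
  · push_neg at hab
    have hBA' : B ≤ A := by rw [hA, hB]; linarith
    have e1 : ENNReal.ofReal (min B 1 - A) = 0 := by
      rw [ENNReal.ofReal_eq_zero]
      have := min_le_left B 1
      linarith
    have e2 : ENNReal.ofReal (B - 1 - (max A 1 - 1)) = 0 := by
      rw [ENNReal.ofReal_eq_zero]
      have := le_max_left A 1
      linarith
    rw [e1, e2, add_zero, eq_comm, ENNReal.ofReal_eq_zero]
    linarith

include hα0 hα1 hx0 hx hx2 in
lemma M_image_IU_meas {l : List (ℝ × ℝ)} (hsubs : ∀ p ∈ l, Set.Ico p.1 p.2 ⊆ Bs x₁ x₂) :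
    MeasurableSet (Mmap α x₁ x₂ '' IU l) := by
  induction l with
  | nil => rw [IU_nil, Set.image_empty]; exact MeasurableSet.empty
  | cons p l ih =>
    rw [IU_cons, Set.image_union, children_image hα0 hα1 hx0 hx hx2 (hsubs p (List.mem_cons_self))]
    exact (measurableSet_Ico.union measurableSet_Ico).union
      (ih fun q hq => hsubs q (List.mem_cons_of_mem p hq))

include hα0 hα1 hx0 hx hx2 in
lemma vol_image_IU {l : List (ℝ × ℝ)} (hsubs : ∀ p ∈ l, Set.Ico p.1 p.2 ⊆ Bs x₁ x₂)
    (hPD : PD l) : volume (Mmap α x₁ x₂ '' IU l) = volume (IU l) := by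
  induction l with
  | nil => rw [IU_nil, Set.image_empty]
  | cons p l ih =>
    rw [PD, List.pairwise_cons] at hPD
    have hsubtl : ∀ q ∈ l, Set.Ico q.1 q.2 ⊆ Bs x₁ x₂ :=
      fun q hq => hsubs q (List.mem_cons_of_mem p hq)
    have hsubp : Set.Ico p.1 p.2 ⊆ Bs x₁ x₂ := hsubs p (List.mem_cons_self)
    have hdisj : Disjoint (Mmap α x₁ x₂ '' Set.Ico p.1 p.2) (Mmap α x₁ x₂ '' IU l) := by
      rw [Set.disjoint_left]
      rintro x ⟨t, ht, rfl⟩ ⟨s, ⟨q, hq, hsq⟩, hst⟩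
      have hsB : s ∈ Bs x₁ x₂ := hsubtl q hq hsq
      have htB : t ∈ Bs x₁ x₂ := hsubp ht
      have : s = t := M_injOn hα0 hx0 hx hx2 hsB htB hst
      exact Set.disjoint_left.1 (hPD.1 q hq) ht (this ▸ hsq)
    rw [IU_cons, Set.image_union,
      measure_union hdisj (M_image_IU_meas hα0 hα1 hx0 hx hx2 hsubtl),
      measure_union (disjoint_IU hPD.1) (IU_measurable l),
      vol_image_piece hα0 hα1 hx0 hx hx2 hsubp, Real.volume_Ico, ih hsubtl hPD.2]

include hα0 hα1 hx0 hx hx2 in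
lemma children_PD {p : ℝ × ℝ} (hsub : Set.Ico p.1 p.2 ⊆ Bs x₁ x₂) :
    PD (children α x₁ x₂ p) := by
  have hBA : p.2 + brc α x₁ x₂ p - 1 ≤ p.1 + brc α x₁ x₂ p := by
    have := piece_len_le_one hx0 hx hx2 hsub; linarith
  set A := p.1 + brc α x₁ x₂ p
  set B := p.2 + brc α x₁ x₂ p
  rw [PD, children, hsplit, hsplit]
  dsimp only
  rw [List.cons_append, List.cons_append, List.nil_append]
  have m1 : min (min B 1) x₁ ≤ x₁ := min_le_right _ _
  have m2 : (x₂:ℝ) ≤ max A x₂ := le_max_right _ _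
  have m3 : min (B-1) x₁ ≤ B - 1 := min_le_left _ _
  have m4 : min (B-1) x₁ ≤ x₁ := min_le_right _ _
  have m5 : (x₂:ℝ) ≤ max (max A 1 - 1) x₂ := le_max_right _ _
  have m6 : min B 1 ≤ B := min_le_left _ _
  refine List.Pairwise.cons ?_ (List.Pairwise.cons ?_ (List.Pairwise.cons ?_ ?_))
  · intro q hq
    simp only [List.mem_cons, List.not_mem_nil, or_false] at hq
    rcases hq with rfl | rfl | rfl <;>
      · rw [Set.Ico_disjoint_Ico]
        simp only []
        first
        | (calc min (min (min B 1) x₁) (min B 1) ≤ min (min B 1) x₁ := min_le_left _ _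
            _ ≤ max A (max A x₂) := by
              have := le_max_right A x₂; have := le_max_right A (max A x₂); linarith)
        | (calc min (min (min B 1) x₁) (min (B-1) x₁) ≤ min (B-1) x₁ := min_le_right _ _
            _ ≤ max A (max A 1 - 1) := by have := le_max_left A (max A 1 - 1); linarith)
        | (calc min (min (min B 1) x₁) (B-1) ≤ B - 1 := min_le_right _ _
            _ ≤ max A (max (max A 1 - 1) x₂) := by have := le_max_left A (max (max A 1 - 1) x₂); linarith)
  · intro q hq
    simp only [List.mem_cons, List.not_mem_nil, or_false] at hq
    rcases hq with rfl | rfl <;>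
      · rw [Set.Ico_disjoint_Ico]
        simp only []
        first
        | (calc min (min B 1) (min (B-1) x₁) ≤ min (B-1) x₁ := min_le_right _ _
            _ ≤ B - 1 := min_le_left _ _
            _ ≤ A := hBA
            _ ≤ max A x₂ := le_max_left _ _
            _ ≤ max (max A x₂) (max A 1 - 1) := le_max_left _ _)
        | (calc min (min B 1) (B-1) ≤ B - 1 := min_le_right _ _
            _ ≤ A := hBA
            _ ≤ max A x₂ := le_max_left _ _
            _ ≤ max (max A x₂) (max (max A 1 - 1) x₂) := le_max_left _ _)
  · intro q hq
    simp only [List.mem_cons, List.not_mem_nil, or_false] at hq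
    rcases hq with rfl
    rw [Set.Ico_disjoint_Ico]
    simp only []
    calc min (min (B-1) x₁) (B-1) ≤ min (B-1) x₁ := min_le_left _ _
      _ ≤ x₁ := min_le_right _ _
      _ ≤ max (max A 1 - 1) (max (max A 1 - 1) x₂) := by
          have := le_max_right (max A 1 - 1) x₂
          have := le_max_right (max A 1 - 1) (max (max A 1 - 1) x₂)
          linarith
  · exact List.pairwise_singleton _ _

include hα0 hα1 hx0 hx hx2 in
lemma PD_flatMap {l : List (ℝ × ℝ)} (hsubs : ∀ p ∈ l, Set.Ico p.1 p.2 ⊆ Bs x₁ x₂)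
    (hPD : PD l) : PD (l.flatMap (children α x₁ x₂)) := by
  induction l with
  | nil => simp [PD]
  | cons p l ih =>
    rw [List.flatMap_cons]
    rw [PD, List.pairwise_append]
    rw [PD, List.pairwise_cons] at hPD
    have hsubtl : ∀ q ∈ l, Set.Ico q.1 q.2 ⊆ Bs x₁ x₂ :=
      fun q hq => hsubs q (List.mem_cons_of_mem p hq)
    have hsubp : Set.Ico p.1 p.2 ⊆ Bs x₁ x₂ := hsubs p (List.mem_cons_self)
    refine ⟨children_PD hα0 hα1 hx0 hx hx2 hsubp, ih hsubtl hPD.2, ?_⟩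
    intro q hq r hr
    rw [List.mem_flatMap] at hr
    obtain ⟨p', hp', hr'⟩ := hr
    have hq' : Set.Ico q.1 q.2 ⊆ Mmap α x₁ x₂ '' Set.Ico p.1 p.2 := by
      refine le_trans (piece_subset_IU hq) ?_
      rw [← children_spec hα0 hα1 hx0 hx hx2 hsubp]
      exact Set.diff_subset
    have hr'' : Set.Ico r.1 r.2 ⊆ Mmap α x₁ x₂ '' Set.Ico p'.1 p'.2 := by
      refine le_trans (piece_subset_IU hr') ?_
      rw [← children_spec hα0 hα1 hx0 hx hx2 (hsubtl p' hp')]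
      exact Set.diff_subset
    have hdisj : Disjoint (Mmap α x₁ x₂ '' Set.Ico p.1 p.2) (Mmap α x₁ x₂ '' Set.Ico p'.1 p'.2) := by
      rw [Set.disjoint_iff_inter_eq_empty,
        ← Set.InjOn.image_inter (M_injOn hα0 hx0 hx hx2) hsubp (hsubtl p' hp'),
        Set.disjoint_iff_inter_eq_empty.1 (hPD.1 p' hp'), Set.image_empty]
    exact Set.disjoint_of_subset hq' hr'' hdisj

include hα0 hα1 hx0 hx hx2 in
lemma IU_LB : ∀ n, IU (LB α x₁ x₂ n) = An α x₁ x₂ n \ Hs x₁ x₂ := by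
  intro n
  induction n with
  | zero =>
    rw [LB, IU_cons, IU_cons, IU_nil, Set.union_empty, An_zero]
    show Set.Ico (0:ℝ) x₁ ∪ Set.Ico x₂ 1 = Set.Ico (0:ℝ) 1 \ Set.Ico x₁ x₂
    rw [Ico_diff_Ico, min_eq_right (by linarith), max_eq_right (by linarith)]
  | succ n ih =>
    have hdiff : An α x₁ x₂ (n+1) \ Hs x₁ x₂
        = Mmap α x₁ x₂ '' (An α x₁ x₂ n \ Hs x₁ x₂) \ Hs x₁ x₂ := by
      rw [An_succ_split hx0 hx2 n, Set.union_diff_left]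
    have hpieces : ∀ p ∈ LB α x₁ x₂ n, Set.Ico p.1 p.2 ⊆ Bs x₁ x₂ := by
      intro p hp
      refine le_trans (piece_subset_IU hp) ?_
      rw [ih]
      exact fun x hx' => ⟨An_subset_Ico n hx'.1, hx'.2⟩
    ext x
    rw [show LB α x₁ x₂ (n+1) = (LB α x₁ x₂ n).flatMap (children α x₁ x₂) from rfl,
      mem_IU_flatMap, hdiff, ← ih]
    constructor
    · rintro ⟨p, hp, hxp⟩
      rw [← children_spec hα0 hα1 hx0 hx hx2 (hpieces p hp)] at hxp
      exact ⟨Set.image_mono (piece_subset_IU hp) hxp.1, hxp.2⟩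
    · rintro ⟨hxim, hxH⟩
      rw [image_IU] at hxim
      obtain ⟨p, hp, hxp⟩ := hxim
      refine ⟨p, hp, ?_⟩
      rw [← children_spec hα0 hα1 hx0 hx hx2 (hpieces p hp)]
      exact ⟨hxp, hxH⟩

include hα0 hα1 hx0 hx hx2 in
lemma LB_subs (n : ℕ) : ∀ p ∈ LB α x₁ x₂ n, Set.Ico p.1 p.2 ⊆ Bs x₁ x₂ := by
  intro p hp
  refine le_trans (piece_subset_IU hp) ?_
  rw [IU_LB hα0 hα1 hx0 hx hx2 n]
  exact fun x hx' => ⟨An_subset_Ico n hx'.1, hx'.2⟩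

include hα0 hα1 hx0 hx hx2 in
lemma LB_PD : ∀ n, PD (LB α x₁ x₂ n) := by
  intro n
  induction n with
  | zero =>
    rw [LB, PD]
    refine List.Pairwise.cons ?_ (List.pairwise_singleton _ _)
    intro q hq
    simp only [List.mem_cons, List.not_mem_nil, or_false] at hq
    subst hq
    rw [Set.Ico_disjoint_Ico]
    simp only []
    calc min x₁ 1 ≤ x₁ := min_le_left _ _
      _ ≤ x₂ := le_of_lt hx
      _ ≤ max 0 x₂ := le_max_right _ _
  | succ n ih =>
    exact PD_flatMap hα0 hα1 hx0 hx hx2 (LB_subs hα0 hα1 hx0 hx hx2 n) ih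

end MeasureSection

section DoomSection

open MeasureTheory
open scoped ENNReal

variable {α x₁ x₂ : ℝ}
variable (hα0 : 0 ≤ α) (hα1 : α < 1) (hx0 : 0 ≤ x₁) (hx : x₁ < x₂) (hx2 : x₂ ≤ 1)

include hα0 hα1 hx0 hx hx2 in
lemma LG_subs (n : ℕ) : ∀ p ∈ LG α x₁ x₂ n, Set.Ico p.1 p.2 ⊆ Bs x₁ x₂ := by
  intro p hp
  refine le_trans (piece_subset_IU hp) ?_
  rw [IU_LG hα0 hα1 hx0 hx hx2 n]
  exact Gam_subset_Bs hx0 hx hx2 n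

lemma mem_children {p q : ℝ × ℝ} :
    q ∈ children α x₁ x₂ p ↔
      q = (p.1 + brc α x₁ x₂ p, min (min (p.2 + brc α x₁ x₂ p) 1) x₁)
      ∨ q = (max (p.1 + brc α x₁ x₂ p) x₂, min (p.2 + brc α x₁ x₂ p) 1)
      ∨ q = (max (p.1 + brc α x₁ x₂ p) 1 - 1, min (p.2 + brc α x₁ x₂ p - 1) x₁)
      ∨ q = (max (max (p.1 + brc α x₁ x₂ p) 1 - 1) x₂, p.2 + brc α x₁ x₂ p - 1) := by
  simp [children, hsplit]

lemma child_len_le {p q : ℝ × ℝ} (hq : q ∈ children α x₁ x₂ p) :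
    q.2 - q.1 ≤ p.2 - p.1 := by
  set c := brc α x₁ x₂ p
  rcases mem_children.1 hq with rfl | rfl | rfl | rfl <;> dsimp only
  · have h1 : min (min (p.2 + c) 1) x₁ ≤ min (p.2 + c) 1 := min_le_left _ _
    have h2 : min (p.2 + c) 1 ≤ p.2 + c := min_le_left _ _
    linarith
  · have h1 : min (p.2 + c) 1 ≤ p.2 + c := min_le_left _ _
    have h2 : p.1 + c ≤ max (p.1 + c) x₂ := le_max_left _ _
    linarith
  · have h1 : min (p.2 + c - 1) x₁ ≤ p.2 + c - 1 := min_le_left _ _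
    have h2 : p.1 + c ≤ max (p.1 + c) 1 := le_max_left _ _
    linarith
  · have h2 : p.1 + c ≤ max (p.1 + c) 1 := le_max_left _ _
    have h3 : max (p.1 + c) 1 - 1 ≤ max (max (p.1 + c) 1 - 1) x₂ := le_max_left _ _
    linarith

include hx0 hx in
lemma child_special {p q : ℝ × ℝ} (hq : q ∈ children α x₁ x₂ p) (hne : q.1 < q.2)
    (hdef : q.2 - q.1 < p.2 - p.1) :
    q.1 = 0 ∨ q.1 = x₂ ∨ q.2 = x₁ ∨ q.2 = 1 := by
  set c := brc α x₁ x₂ p with hc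
  rcases mem_children.1 hq with rfl | rfl | rfl | rfl <;> dsimp only at hne hdef ⊢
  · -- (A, min (min B 1) x₁)
    rcases le_total (min (p.2 + c) 1) x₁ with h | h
    · rw [min_eq_left h] at hne hdef ⊢
      rcases le_total (p.2 + c) 1 with h' | h'
      · rw [min_eq_left h'] at hne hdef ⊢
        exfalso; linarith
      · rw [min_eq_right h'] at hne hdef ⊢
        exact Or.inr (Or.inr (Or.inr rfl))
    · rw [min_eq_right h] at hne hdef ⊢
      exact Or.inr (Or.inr (Or.inl rfl))
  · -- (max A x₂, min B 1)
    rcases le_total x₂ (p.1 + c) with h | h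
    · rw [max_eq_left h] at hne hdef ⊢
      rcases le_total (p.2 + c) 1 with h' | h'
      · rw [min_eq_left h'] at hne hdef ⊢
        exfalso; linarith
      · rw [min_eq_right h'] at hne hdef ⊢
        exact Or.inr (Or.inr (Or.inr rfl))
    · rw [max_eq_right h] at hne hdef ⊢
      exact Or.inr (Or.inl rfl)
  · -- (max A 1 - 1, min (B-1) x₁)
    rcases le_total 1 (p.1 + c) with h | h
    · rw [max_eq_left h] at hne hdef ⊢
      rcases le_total (p.2 + c - 1) x₁ with h' | h'
      · rw [min_eq_left h'] at hne hdef ⊢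
        exfalso; linarith
      · rw [min_eq_right h'] at hne hdef ⊢
        exact Or.inr (Or.inr (Or.inl rfl))
    · rw [max_eq_right h] at hne hdef ⊢
      left; ring
  · -- (max (max A 1 - 1) x₂, B - 1)
    rcases le_total x₂ (max (p.1 + c) 1 - 1) with h | h
    · rw [max_eq_left h] at hne hdef ⊢
      rcases le_total 1 (p.1 + c) with h' | h'
      · rw [max_eq_left h'] at hne hdef ⊢
        exfalso; linarith
      · rw [max_eq_right h'] at h
        exfalso; linarith
    · rw [max_eq_right h] at hne hdef ⊢
      exact Or.inr (Or.inl rfl)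

lemma bound_of_subsingleton {P : ℕ → Prop} (h : ∀ m n, P m → P n → m = n) :
    ∃ N, ∀ n, N ≤ n → ¬ P n := by
  by_cases hE : ∃ n, P n
  · obtain ⟨m, hm⟩ := hE
    exact ⟨m + 1, fun n hn hP => by have := h m n hm hP; omega⟩
  · exact ⟨0, fun n _ hP => hE ⟨n, hP⟩⟩

include hα0 hα1 hx0 hx hx2 in
lemma level_eq {n n' : ℕ} {p q : ℝ × ℝ} (hp : p ∈ LG α x₁ x₂ n) (hq : q ∈ LG α x₁ x₂ n')
    {z : ℝ} (hzp : z ∈ Set.Ico p.1 p.2) (hzq : z ∈ Set.Ico q.1 q.2) : n = n' := by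
  by_contra hne
  have hz1 : z ∈ Gam α x₁ x₂ n := by
    rw [← IU_LG hα0 hα1 hx0 hx hx2 n]; exact piece_subset_IU hp hzp
  have hz2 : z ∈ Gam α x₁ x₂ n' := by
    rw [← IU_LG hα0 hα1 hx0 hx hx2 n']; exact piece_subset_IU hq hzq
  rcases lt_or_gt_of_ne hne with h | h
  · have hd := Gam_disjoint hα0 hx0 hx hx2 n (n' - n - 1)
    rw [show n + (n' - n - 1) + 1 = n' by omega] at hd
    have : z ∈ (∅ : Set ℝ) := hd ▸ Set.mem_inter hz1 hz2
    exact this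
  · have hd := Gam_disjoint hα0 hx0 hx hx2 n' (n - n' - 1)
    rw [show n' + (n - n' - 1) + 1 = n by omega] at hd
    have : z ∈ (∅ : Set ℝ) := hd ▸ Set.mem_inter hz2 hz1
    exact this

lemma exists_minlen (l : List (ℝ × ℝ)) :
    ∃ δ, 0 < δ ∧ ∀ p ∈ l, p.1 < p.2 → δ ≤ p.2 - p.1 := by
  induction l with
  | nil => exact ⟨1, one_pos, by simp⟩
  | cons p l ih =>
    obtain ⟨δ', hδ', h'⟩ := ih
    by_cases hp : p.1 < p.2
    · refine ⟨min δ' (p.2 - p.1), lt_min hδ' (by linarith), ?_⟩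
      intro q hq hqne
      rcases List.mem_cons.1 hq with rfl | hq'
      · exact min_le_right _ _
      · exact le_trans (min_le_left _ _) (h' q hq' hqne)
    · refine ⟨δ', hδ', ?_⟩
      intro q hq hqne
      rcases List.mem_cons.1 hq with rfl | hq'
      · exact absurd hqne hp
      · exact h' q hq' hqne

include hα0 hα1 hx0 hx hx2 in
lemma Gam_measurable (n : ℕ) : MeasurableSet (Gam α x₁ x₂ n) := by
  rw [← IU_LG hα0 hα1 hx0 hx hx2 n]; exact IU_measurable _

include hα0 hα1 hx0 hx hx2 in
lemma exists_doom : ∃ N, Gam α x₁ x₂ N = ∅ := by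
  by_contra hcon
  push_neg at hcon
  -- subsingleton properties for the four special endpoints
  have sub0 : ∀ m n, (∃ p ∈ LG α x₁ x₂ m, p.1 < p.2 ∧ p.1 = 0)
      → (∃ p ∈ LG α x₁ x₂ n, p.1 < p.2 ∧ p.1 = 0) → m = n := by
    rintro m n ⟨p, hp, hpne, hp1⟩ ⟨q, hq, hqne, hq1⟩
    exact level_eq hα0 hα1 hx0 hx hx2 hp hq (z := 0)
      ⟨hp1.le, hp1 ▸ hpne⟩ ⟨hq1.le, hq1 ▸ hqne⟩
  have sub2 : ∀ m n, (∃ p ∈ LG α x₁ x₂ m, p.1 < p.2 ∧ p.1 = x₂)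
      → (∃ p ∈ LG α x₁ x₂ n, p.1 < p.2 ∧ p.1 = x₂) → m = n := by
    rintro m n ⟨p, hp, hpne, hp1⟩ ⟨q, hq, hqne, hq1⟩
    exact level_eq hα0 hα1 hx0 hx hx2 hp hq (z := x₂)
      ⟨hp1.le, hp1 ▸ hpne⟩ ⟨hq1.le, hq1 ▸ hqne⟩
  have sub1r : ∀ m n, (∃ p ∈ LG α x₁ x₂ m, p.1 < p.2 ∧ p.2 = x₁)
      → (∃ p ∈ LG α x₁ x₂ n, p.1 < p.2 ∧ p.2 = x₁) → m = n := by
    rintro m n ⟨p, hp, hpne, hp1⟩ ⟨q, hq, hqne, hq1⟩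
    refine level_eq hα0 hα1 hx0 hx hx2 hp hq (z := max p.1 q.1)
      ⟨le_max_left _ _, ?_⟩ ⟨le_max_right _ _, ?_⟩
    · rw [hp1]; exact max_lt (hp1 ▸ hpne) (hq1 ▸ hqne)
    · rw [hq1]; exact max_lt (hp1 ▸ hpne) (hq1 ▸ hqne)
  have sub1 : ∀ m n, (∃ p ∈ LG α x₁ x₂ m, p.1 < p.2 ∧ p.2 = 1)
      → (∃ p ∈ LG α x₁ x₂ n, p.1 < p.2 ∧ p.2 = 1) → m = n := by
    rintro m n ⟨p, hp, hpne, hp1⟩ ⟨q, hq, hqne, hq1⟩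
    refine level_eq hα0 hα1 hx0 hx hx2 hp hq (z := max p.1 q.1)
      ⟨le_max_left _ _, ?_⟩ ⟨le_max_right _ _, ?_⟩
    · rw [hp1]; exact max_lt (hp1 ▸ hpne) (hq1 ▸ hqne)
    · rw [hq1]; exact max_lt (hp1 ▸ hpne) (hq1 ▸ hqne)
  obtain ⟨N0, h0⟩ := bound_of_subsingleton sub0
  obtain ⟨N2, h2⟩ := bound_of_subsingleton sub2
  obtain ⟨N1r, h1r⟩ := bound_of_subsingleton sub1r
  obtain ⟨N1, h1⟩ := bound_of_subsingleton sub1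
  set NN := max (max N0 N2) (max N1r N1) with hNN
  -- beyond NN there are no deficient children
  have hnodef : ∀ n, NN ≤ n → ∀ p ∈ LG α x₁ x₂ n, ∀ q ∈ children α x₁ x₂ p,
      q.1 < q.2 → q.2 - q.1 = p.2 - p.1 := by
    intro n hn p hp q hq hqne
    refine le_antisymm (child_len_le hq) ?_
    by_contra hdef
    push_neg at hdef
    have hqLG : q ∈ LG α x₁ x₂ (n + 1) := by
      show q ∈ (LG α x₁ x₂ n).flatMap (children α x₁ x₂)
      exact List.mem_flatMap.2 ⟨p, hp, hq⟩
    rcases child_special hx0 hx hq hqne hdef with hs | hs | hs | hs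
    · exact h0 (n+1) (by omega) ⟨q, hqLG, hqne, hs⟩
    · exact h2 (n+1) (by omega) ⟨q, hqLG, hqne, hs⟩
    · exact h1r (n+1) (by omega) ⟨q, hqLG, hqne, hs⟩
    · exact h1 (n+1) (by omega) ⟨q, hqLG, hqne, hs⟩
  -- a uniform lower bound on piece lengths from level NN on
  obtain ⟨δ, hδpos, hδ⟩ := exists_minlen (LG α x₁ x₂ NN)
  have hlow : ∀ k, ∀ p ∈ LG α x₁ x₂ (NN + k), p.1 < p.2 → δ ≤ p.2 - p.1 := by
    intro k
    induction k with
    | zero => exact hδ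
    | succ k ih =>
      intro p hp hpne
      have hp' : p ∈ (LG α x₁ x₂ (NN + k)).flatMap (children α x₁ x₂) := hp
      obtain ⟨r, hr, hpr⟩ := List.mem_flatMap.1 hp'
      have heq := hnodef (NN + k) (by omega) r hr p hpr hpne
      have hrne : r.1 < r.2 := by linarith
      have := ih r hr hrne
      linarith
  -- volume lower bound on generations
  have hvol : ∀ k, ENNReal.ofReal δ ≤ volume (Gam α x₁ x₂ (NN + k)) := by
    intro k
    obtain ⟨x, hx'⟩ := hcon (NN + k)
    rw [← IU_LG hα0 hα1 hx0 hx hx2 (NN + k)] at hx'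
    obtain ⟨p, hp, hxp⟩ := hx'
    have hpne : p.1 < p.2 := lt_of_le_of_lt hxp.1 hxp.2
    calc ENNReal.ofReal δ ≤ ENNReal.ofReal (p.2 - p.1) :=
          ENNReal.ofReal_le_ofReal (hlow k p hp hpne)
      _ = volume (Set.Ico p.1 p.2) := (Real.volume_Ico).symm
      _ ≤ volume (Gam α x₁ x₂ (NN + k)) := by
          refine measure_mono ?_
          rw [← IU_LG hα0 hα1 hx0 hx hx2 (NN + k)]
          exact piece_subset_IU hp
  -- summing up disjoint generations gives a contradiction
  obtain ⟨K, hK⟩ := exists_nat_gt (1 / δ)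
  have hdisjF : ((Finset.range K : Finset ℕ) : Set ℕ).PairwiseDisjoint
      (fun k => Gam α x₁ x₂ (NN + k)) := by
    intro i _ j _ hij
    have key : ∀ a b : ℕ, a < b → Disjoint (Gam α x₁ x₂ (NN + a)) (Gam α x₁ x₂ (NN + b)) := by
      intro a b hab
      rw [Set.disjoint_iff_inter_eq_empty]
      have hd := Gam_disjoint hα0 hx0 hx hx2 (NN + a) (b - a - 1)
      rwa [show NN + a + (b - a - 1) + 1 = NN + b by omega] at hd
    rcases lt_or_gt_of_ne hij with h | h
    · exact key i j h
    · exact (key j i h).symm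
  have hsum := measure_biUnion_finset (μ := volume) hdisjF
    (fun k _ => Gam_measurable hα0 hα1 hx0 hx hx2 (NN + k))
  have hle : volume (⋃ k ∈ Finset.range K, Gam α x₁ x₂ (NN + k)) ≤ 1 := by
    have hsub : (⋃ k ∈ Finset.range K, Gam α x₁ x₂ (NN + k)) ⊆ Set.Ico (0:ℝ) 1 := by
      refine Set.iUnion₂_subset ?_
      intro k _
      exact fun x hx' => (Gam_subset_Bs hx0 hx hx2 (NN + k) hx').1
    calc volume (⋃ k ∈ Finset.range K, Gam α x₁ x₂ (NN + k)) ≤ volume (Set.Ico (0:ℝ) 1) :=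
        measure_mono hsub
      _ = 1 := by rw [Real.volume_Ico]; norm_num
  rw [hsum] at hle
  have hge : (K : ℝ≥0∞) * ENNReal.ofReal δ ≤ ∑ k ∈ Finset.range K, volume (Gam α x₁ x₂ (NN + k)) := by
    calc (K : ℝ≥0∞) * ENNReal.ofReal δ = ∑ _x ∈ Finset.range K, ENNReal.ofReal δ := by
          rw [Finset.sum_const, Finset.card_range, nsmul_eq_mul]
      _ ≤ ∑ k ∈ Finset.range K, volume (Gam α x₁ x₂ (NN + k)) :=
          Finset.sum_le_sum (fun k _ => hvol k)
  have hfinal : (K : ℝ≥0∞) * ENNReal.ofReal δ ≤ 1 := le_trans hge hle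
  rw [← ENNReal.ofReal_natCast K, ← ENNReal.ofReal_mul (by positivity)] at hfinal
  rw [show (1 : ℝ≥0∞) = ENNReal.ofReal 1 by rw [ENNReal.ofReal_one]] at hfinal
  rw [ENNReal.ofReal_le_ofReal_iff (by norm_num)] at hfinal
  have : (1:ℝ) < K * δ := by
    rw [div_lt_iff₀ hδpos] at hK
    linarith
  linarith

end DoomSection

section FinalSection

open MeasureTheory
open scoped ENNReal

variable {α x₁ x₂ : ℝ}
variable (hα0 : 0 ≤ α) (hα1 : α < 1) (hx0 : 0 ≤ x₁) (hx : x₁ < x₂) (hx2 : x₂ ≤ 1)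

include hα0 hα1 hx0 hx hx2 in
lemma S_subset_M_image {N : ℕ} (hN : Gam α x₁ x₂ N = ∅) :
    Sset α x₁ x₂ ⊆ Mmap α x₁ x₂ '' Sset α x₁ x₂ := by
  intro t ht
  have htH : t ∉ Hs x₁ x₂ := by
    have := ht.2 0
    rwa [Function.iterate_zero_apply] at this
  have htMB : t ∈ Mmap α x₁ x₂ '' Bs x₁ x₂ := by
    by_contra hnot
    have hG0 : t ∈ Gam α x₁ x₂ 0 := ⟨⟨ht.1, hnot⟩, htH⟩
    have hall : ∀ n, (Mmap α x₁ x₂)^[n] t ∈ Gam α x₁ x₂ n := by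
      intro n
      induction n with
      | zero => rwa [Function.iterate_zero_apply]
      | succ n ih =>
        have h1 : (Mmap α x₁ x₂)^[n+1] t = Mmap α x₁ x₂ ((Mmap α x₁ x₂)^[n] t) :=
          Function.iterate_succ_apply' _ _ _
        refine ⟨?_, ?_⟩
        · rw [h1]; exact Set.mem_image_of_mem _ ih
        · exact ht.2 (n+1)
    have := hall N
    rw [hN] at this
    exact this
  obtain ⟨u, huB, hut⟩ := htMB
  refine ⟨u, ⟨huB.1, ?_⟩, hut⟩
  intro n
  cases n with
  | zero =>
    rw [Function.iterate_zero_apply]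
    exact huB.2
  | succ n =>
    rw [Function.iterate_succ_apply, hut]
    exact ht.2 n

include hα0 hα1 hx0 hx hx2 in
lemma S_subset_An {N : ℕ} (hN : Gam α x₁ x₂ N = ∅) :
    ∀ n, Sset α x₁ x₂ ⊆ An α x₁ x₂ n := by
  intro n
  induction n with
  | zero => rw [An_zero]; exact fun t ht => ht.1
  | succ n ih =>
    rw [An_succ]
    exact le_trans (S_subset_M_image hα0 hα1 hx0 hx hx2 hN) (Set.image_mono ih)

end FinalSection
end MIS

open MeasureTheory MIS in
/-- There is an `N` with `𝓢 = 𝓜^N([0,1)) \ H`. -/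
theorem maximalInvariantSet_eq_iterate (α x₁ x₂ : ℝ) (hα0 : 0 ≤ α) (hα1 : α < 1)
    (hx0 : 0 ≤ x₁) (hx : x₁ < x₂) (hx2 : x₂ ≤ 1) :
    ∃ N : ℕ, Sset α x₁ x₂ =
      (Mmap α x₁ x₂)^[N] '' Set.Ico (0 : ℝ) 1 \ Set.Ico x₁ x₂ := by
  classical
  obtain ⟨N, hN⟩ := MIS.exists_doom hα0 hα1 hx0 hx hx2
  refine ⟨N, ?_⟩
  have stab : An α x₁ x₂ (N+1) = An α x₁ x₂ N :=
    An_stab hα0 hx0 hx hx2 hN (by omega)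
  set C := An α x₁ x₂ N \ Hs x₁ x₂ with hC
  have hCrec : C = Mmap α x₁ x₂ '' C \ Hs x₁ x₂ := by
    calc C = An α x₁ x₂ (N+1) \ Hs x₁ x₂ := by rw [hC, stab]
      _ = Mmap α x₁ x₂ '' (An α x₁ x₂ N \ Hs x₁ x₂) \ Hs x₁ x₂ := by
          rw [An_succ_split hx0 hx2 N, Set.union_diff_left]
      _ = Mmap α x₁ x₂ '' C \ Hs x₁ x₂ := by rw [← hC]
  have hCIU : C = IU (LB α x₁ x₂ N) := by
    rw [IU_LB hα0 hα1 hx0 hx hx2 N, hC]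
  have hvol : volume (Mmap α x₁ x₂ '' C) = volume C := by
    rw [hCIU]
    exact vol_image_IU hα0 hα1 hx0 hx hx2 (LB_subs hα0 hα1 hx0 hx hx2 N)
      (LB_PD hα0 hα1 hx0 hx hx2 N)
  have hCsub01 : C ⊆ Set.Ico (0:ℝ) 1 := fun x hx' => An_subset_Ico N hx'.1
  have hCfin : volume C ≠ ⊤ := by
    refine ne_top_of_le_ne_top ?_ (measure_mono hCsub01)
    rw [Real.volume_Ico]
    exact ENNReal.ofReal_lt_top.ne
  have hCH : Mmap α x₁ x₂ '' C ∩ Hs x₁ x₂ = ∅ := by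
    have key := measure_inter_add_diff (μ := volume) (Mmap α x₁ x₂ '' C)
      (measurableSet_Ico : MeasurableSet (Hs x₁ x₂))
    rw [show Set.Ico x₁ x₂ = Hs x₁ x₂ from rfl] at key
    rw [← hCrec, hvol] at key
    have hzero : volume (Mmap α x₁ x₂ '' C ∩ Hs x₁ x₂) = 0 := by
      have h' : volume (Mmap α x₁ x₂ '' C ∩ Hs x₁ x₂) + volume C = 0 + volume C := by
        rw [zero_add]; exact key
      exact (ENNReal.add_left_inj hCfin).1 h'
    by_contra hne
    obtain ⟨w, hw⟩ := Set.nonempty_iff_ne_empty.2 hne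
    have hwM : w ∈ Mmap α x₁ x₂ '' IU (LB α x₁ x₂ N) := by rw [← hCIU]; exact hw.1
    rw [image_IU] at hwM
    obtain ⟨p, hp, hwp⟩ := hwM
    have hkill : ∀ a' b' : ℝ, w ∈ Set.Ico a' b' → Set.Ico a' b' ⊆ Mmap α x₁ x₂ '' C → False := by
      intro a' b' hwin hsubim
      have hsub2 : Set.Ico (max a' x₁) (min b' x₂) ⊆ Mmap α x₁ x₂ '' C ∩ Hs x₁ x₂ := by
        rw [← Set.Ico_inter_Ico]
        exact Set.inter_subset_inter_left _ hsubim
      have hwin2 : w ∈ Set.Ico (max a' x₁) (min b' x₂) := by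
        rw [← Set.Ico_inter_Ico]
        exact ⟨hwin, hw.2⟩
      have hpos : (0:ENNReal) < volume (Set.Ico (max a' x₁) (min b' x₂)) := by
        rw [Real.volume_Ico]
        rw [ENNReal.ofReal_pos]
        have := hwin2.1; have := hwin2.2
        linarith
      have : volume (Set.Ico (max a' x₁) (min b' x₂)) ≤ 0 := hzero ▸ measure_mono hsub2
      exact absurd (lt_of_lt_of_le hpos this) (lt_irrefl _)
    have hpc : Set.Ico p.1 p.2 ⊆ C := by rw [hCIU]; exact piece_subset_IU hp
    have himsub : Mmap α x₁ x₂ '' Set.Ico p.1 p.2 ⊆ Mmap α x₁ x₂ '' C := Set.image_mono hpc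
    rw [children_image hα0 hα1 hx0 hx hx2 (LB_subs hα0 hα1 hx0 hx hx2 N p hp)] at hwp himsub
    rcases hwp with hwp | hwp
    · exact hkill _ _ hwp (le_trans Set.subset_union_left himsub)
    · exact hkill _ _ hwp (le_trans Set.subset_union_right himsub)
  have hMC : Mmap α x₁ x₂ '' C = C := by
    conv_lhs => rw [← Set.inter_union_diff (Mmap α x₁ x₂ '' C) (Hs x₁ x₂)]
    rw [hCH, Set.empty_union, ← hCrec]
  have hCS : C ⊆ Sset α x₁ x₂ := by
    intro t htC
    have horb : ∀ n, (Mmap α x₁ x₂)^[n] t ∈ C := by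
      intro n
      induction n with
      | zero => rwa [Function.iterate_zero_apply]
      | succ n ih =>
        rw [Function.iterate_succ_apply']
        rw [← hMC]
        exact Set.mem_image_of_mem _ ih
    exact ⟨hCsub01 htC, fun n => (horb n).2⟩
  have hfinal : Sset α x₁ x₂ = C := by
    apply Set.Subset.antisymm
    · intro t ht
      refine ⟨S_subset_An hα0 hα1 hx0 hx hx2 hN N ht, ?_⟩
      have := ht.2 0
      rwa [Function.iterate_zero_apply] at this
    · exact hCS
  rw [hfinal, hC]
  rfl
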